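/- (Lipschitz dependence of the stationary value map on the measure.) With S^μ as the contraction map of the stationary discounted value equation and u^μ its fixed point, the map 𝒯₁ : 𝒫([d]) → ℝ^d, μ ↦ u^μ, is Lipschitz with respect to the sup-norms; specifically ‖u^μ − u^{μ̃}‖_∞ ≤ (( (d−1)𝔞_u + r ) / r) · (C_{L,F}/((d−1)𝔞_l + r)) ‖μ − μ̃‖_∞, where C_{L,F} is the Lipschitz constant of F(x,·). -/

import Mathlib

/-- The set of admissible rate vectors at state `x`. -/
def admissibleRates (d : ℕ) (al au : ℝ) (x : Fin d) : Set (Fin d → ℝ) :=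
  {a : Fin d → ℝ | (∀ y, y ≠ x → a y ∈ Set.Icc al au) ∧
    a x = -∑ y ∈ Finset.univ \ {x}, a y}

private lemma abs_csInf_sub_csInf' {α : Type*} {K : Set α} (hK : K.Nonempty) {g h : α → ℝ}
    (hg : BddBelow (g '' K)) (hh : BddBelow (h '' K)) {c : ℝ}
    (hc : ∀ a ∈ K, |g a - h a| ≤ c) :
    |sInf (g '' K) - sInf (h '' K)| ≤ c := by
  rw [abs_sub_le_iff]
  constructor
  · have : sInf (g '' K) - c ≤ sInf (h '' K) := by
      refine le_csInf (hK.image h) ?_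
      rintro b ⟨a, ha, rfl⟩
      have h1 : sInf (g '' K) ≤ g a := csInf_le hg ⟨a, ha, rfl⟩
      have h2 := abs_le.mp (hc a ha)
      linarith [h2.1, h2.2]
    linarith
  · have : sInf (h '' K) - c ≤ sInf (g '' K) := by
      refine le_csInf (hK.image g) ?_
      rintro b ⟨a, ha, rfl⟩
      have h1 : sInf (h '' K) ≤ h a := csInf_le hh ⟨a, ha, rfl⟩
      have h2 := abs_le.mp (hc a ha)
      linarith [h2.1, h2.2]
    linarith

private lemma sum_mem_Icc' {d : ℕ} (hd : 2 ≤ d) {al au : ℝ} (x : Fin d) {a : Fin d → ℝ}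
    (h : ∀ y, y ≠ x → a y ∈ Set.Icc al au) :
    ∑ y ∈ Finset.univ \ {x}, a y ∈ Set.Icc (((d:ℝ) - 1) * al) (((d:ℝ) - 1) * au) := by
  have hcard : ((Finset.univ \ {x} : Finset (Fin d))).card = d - 1 := by
    rw [Finset.card_sdiff_of_subset (by simp)]; simp
  have hcast : (((d - 1 : ℕ)) : ℝ) = (d : ℝ) - 1 := by
    have : 1 ≤ d := by omega
    push_cast [Nat.cast_sub this]; ring
  constructor
  · have := Finset.card_nsmul_le_sum (Finset.univ \ {x}) a al
      (fun y hy => (h y (by simpa using (Finset.mem_sdiff.mp hy).2)).1)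
    rwa [hcard, nsmul_eq_mul, hcast] at this
  · have := Finset.sum_le_card_nsmul (Finset.univ \ {x}) a au
      (fun y hy => (h y (by simpa using (Finset.mem_sdiff.mp hy).2)).2)
    rwa [hcard, nsmul_eq_mul, hcast] at this

private lemma admissible_nonempty' {d : ℕ} (al au : ℝ) (hau : al ≤ au) (x : Fin d) :
    (admissibleRates d al au x).Nonempty := by
  refine ⟨Function.update (fun _ => al) x (-∑ y ∈ Finset.univ \ {x}, al), ?_, ?_⟩
  · intro y hy
    rw [Function.update_of_ne hy]
    exact ⟨le_refl _, hau⟩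
  · rw [Function.update_self]
    congr 1
    refine Finset.sum_congr rfl (fun y hy => ?_)
    rw [Function.update_of_ne (by simpa using (Finset.mem_sdiff.mp hy).2)]

private lemma admissible_compact' {d : ℕ} (hd : 2 ≤ d) {al au : ℝ} (hal : 0 < al)
    (hau : al ≤ au) (x : Fin d) : IsCompact (admissibleRates d al au x) := by
  have hclosed : IsClosed (admissibleRates d al au x) := by
    have h1 : IsClosed {a : Fin d → ℝ | ∀ y, y ≠ x → a y ∈ Set.Icc al au} := by
      have : {a : Fin d → ℝ | ∀ y, y ≠ x → a y ∈ Set.Icc al au}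
          = ⋂ y ∈ {y : Fin d | y ≠ x}, (fun a : Fin d → ℝ => a y) ⁻¹' Set.Icc al au := by
        ext a; simp [Set.mem_iInter]
      rw [this]
      exact isClosed_biInter fun y _ => isClosed_Icc.preimage (continuous_apply y)
    have h2 : IsClosed {a : Fin d → ℝ | a x = -∑ y ∈ Finset.univ \ {x}, a y} :=
      isClosed_eq (continuous_apply x)
        (Continuous.neg (continuous_finset_sum _ fun y _ => continuous_apply y))
    exact h1.inter h2
  have hbdd : Bornology.IsBounded (admissibleRates d al au x) := by
    rw [Metric.isBounded_iff_subset_closedBall 0]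
    refine ⟨((d:ℝ) - 1) * au, fun a ⟨h1, h2⟩ => ?_⟩
    rw [Metric.mem_closedBall, dist_zero_right]
    have hd1 : (1:ℝ) ≤ (d:ℝ) - 1 := by
      have : (2:ℝ) ≤ d := by exact_mod_cast hd
      linarith
    have hsum := sum_mem_Icc' hd x h1
    have hau0 : 0 < au := lt_of_lt_of_le hal hau
    refine pi_norm_le_iff_of_nonneg (by nlinarith) |>.mpr fun y => ?_
    by_cases hyx : y = x
    · subst hyx
      rw [h2, Real.norm_eq_abs, abs_neg, abs_le]
      constructor <;> nlinarith [hsum.1, hsum.2]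
    · have := h1 y hyx
      rw [Real.norm_eq_abs, abs_le]
      constructor <;> nlinarith [this.1, this.2]
  exact Metric.isCompact_of_isClosed_isBounded hclosed hbdd

private lemma integrand_bddBelow' {d : ℕ} (hd : 2 ≤ d) {al au r : ℝ} (hal : 0 < al)
    (hau : al ≤ au) (hr : 0 < r) (x : Fin d) (fx : (Fin d → ℝ) → ℝ) (hfx : Continuous fx)
    (u : Fin d → ℝ) (c : ℝ) :
    BddBelow ((fun a => (∑ y ∈ Finset.univ \ {x}, a y + r)⁻¹ *
        (∑ y ∈ Finset.univ \ {x}, a y * u y + fx a + c)) '' admissibleRates d al au x) := by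
  have hd1 : (0:ℝ) < (d:ℝ) - 1 := by
    have : (2:ℝ) ≤ d := by exact_mod_cast hd
    linarith
  have hcont : ContinuousOn (fun a : Fin d → ℝ => (∑ y ∈ Finset.univ \ {x}, a y + r)⁻¹ *
      (∑ y ∈ Finset.univ \ {x}, a y * u y + fx a + c)) (admissibleRates d al au x) := by
    refine ContinuousOn.mul (ContinuousOn.inv₀ ?_ ?_) ?_
    · exact ((continuous_finset_sum _ fun y _ => continuous_apply y).add
        continuous_const).continuousOn
    · intro a ha
      have := (sum_mem_Icc' hd x ha.1).1
      nlinarith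
    · exact (((continuous_finset_sum _ fun y _ =>
        (continuous_apply y).mul continuous_const).add hfx).add
        continuous_const).continuousOn
  exact ((admissible_compact' hd hal hau x).image_of_continuousOn hcont).bddBelow

theorem stationary_value_map_lipschitz_in_measure
    (d : ℕ) (hd : 2 ≤ d) (al au r CLF : ℝ)
    (hal : 0 < al) (hau : al ≤ au) (hr : 0 < r)
    (f F : Fin d → (Fin d → ℝ) → ℝ)
    (hf : ∀ x, Continuous (f x))
    (hF : ∀ (x : Fin d) (η η' : Fin d → ℝ), |F x η - F x η'| ≤ CLF * ‖η - η'‖)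
    (S : (Fin d → ℝ) → (Fin d → ℝ) → Fin d → ℝ)
    (hS : ∀ (ν u : Fin d → ℝ) (x : Fin d), S ν u x =
      sInf ((fun a => (∑ y ∈ Finset.univ \ {x}, a y + r)⁻¹ *
          (∑ y ∈ Finset.univ \ {x}, a y * u y + f x a + F x ν)) ''
        admissibleRates d al au x))
    (μ μ' : Fin d → ℝ)
    (hμ : (∀ x, 0 ≤ μ x) ∧ ∑ x : Fin d, μ x = 1)
    (hμ' : (∀ x, 0 ≤ μ' x) ∧ ∑ x : Fin d, μ' x = 1)
    (u u' : Fin d → ℝ)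
    (hu : S μ u = u) (hu' : S μ' u' = u') :
    ‖u - u'‖ ≤ ((((d : ℝ) - 1) * au + r) / r) *
        (CLF / (((d : ℝ) - 1) * al + r)) * ‖μ - μ'‖ := by
  have hd1 : (0:ℝ) < (d:ℝ) - 1 := by
    have : (2:ℝ) ≤ d := by exact_mod_cast hd
    linarith
  set A := ((d:ℝ) - 1) * al + r with hA
  set B := ((d:ℝ) - 1) * au with hB
  have hA0 : 0 < A := by positivity
  have hB0 : 0 < B := by rw [hB]; exact mul_pos hd1 (lt_of_lt_of_le hal hau)
  have hBr : 0 < B + r := by positivity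
  set m := ‖μ - μ'‖ with hm
  set N := ‖u - u'‖ with hN
  have hm0 : 0 ≤ m := norm_nonneg _
  have hN0 : 0 ≤ N := norm_nonneg _
  have hCm : 0 ≤ CLF * m := le_trans (abs_nonneg _) (hF ⟨0, by omega⟩ μ μ')
  set c1 := CLF * m / A with hc1
  set c2 := B / (B + r) * N with hc2
  have hc10 : 0 ≤ c1 := div_nonneg hCm hA0.le
  have hc20 : 0 ≤ c2 := mul_nonneg (by positivity) hN0
  -- pointwise bound for every coordinate
  have key : ∀ x : Fin d, |u x - u' x| ≤ c1 + c2 := by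
    intro x
    have hKne := admissible_nonempty' al au hau x
    have hbb1 := integrand_bddBelow' hd hal hau hr x (f x) (hf x) u (F x μ)
    have hbb2 := integrand_bddBelow' hd hal hau hr x (f x) (hf x) u (F x μ')
    have hbb3 := integrand_bddBelow' hd hal hau hr x (f x) (hf x) u' (F x μ')
    -- sum facts
    have hsfacts : ∀ a ∈ admissibleRates d al au x,
        ((d:ℝ)-1)*al ≤ ∑ y ∈ Finset.univ \ {x}, a y ∧
        ∑ y ∈ Finset.univ \ {x}, a y ≤ B := fun a ha =>
      ⟨(sum_mem_Icc' hd x ha.1).1, (sum_mem_Icc' hd x ha.1).2⟩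
    -- term 1 : measure perturbation
    have t1 : |S μ u x - S μ' u x| ≤ c1 := by
      rw [hS μ u x, hS μ' u x]
      refine abs_csInf_sub_csInf' hKne hbb1 hbb2 ?_
      intro a ha
      obtain ⟨hs1, hs2⟩ := hsfacts a ha
      set sa := ∑ y ∈ Finset.univ \ {x}, a y with hsa
      have hsa0 : 0 < sa + r := by nlinarith
      have heq : (sa + r)⁻¹ * (∑ y ∈ Finset.univ \ {x}, a y * u y + f x a + F x μ)
          - (sa + r)⁻¹ * (∑ y ∈ Finset.univ \ {x}, a y * u y + f x a + F x μ')
          = (sa + r)⁻¹ * (F x μ - F x μ') := by ring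
      rw [heq, abs_mul, abs_of_pos (inv_pos.mpr hsa0)]
      have h1 : |F x μ - F x μ'| ≤ CLF * m := hF x μ μ'
      have h2 : (sa + r)⁻¹ ≤ A⁻¹ := by
        apply inv_anti₀ hA0
        rw [hA]; linarith
      calc (sa + r)⁻¹ * |F x μ - F x μ'| ≤ A⁻¹ * (CLF * m) := by
            apply mul_le_mul h2 h1 (abs_nonneg _) (by positivity)
        _ = c1 := by rw [hc1]; ring
    -- term 2 : contraction in u
    have t2 : |S μ' u x - S μ' u' x| ≤ c2 := by
      rw [hS μ' u x, hS μ' u' x]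
      refine abs_csInf_sub_csInf' hKne hbb2 hbb3 ?_
      intro a ha
      obtain ⟨hs1, hs2⟩ := hsfacts a ha
      set sa := ∑ y ∈ Finset.univ \ {x}, a y with hsa
      have hsa1 : 0 < sa := lt_of_lt_of_le (by positivity) hs1
      have hsa0 : 0 < sa + r := by linarith
      have heq : (sa + r)⁻¹ * (∑ y ∈ Finset.univ \ {x}, a y * u y + f x a + F x μ')
          - (sa + r)⁻¹ * (∑ y ∈ Finset.univ \ {x}, a y * u' y + f x a + F x μ')
          = (sa + r)⁻¹ * (∑ y ∈ Finset.univ \ {x}, a y * (u y - u' y)) := by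
        have : ∑ y ∈ Finset.univ \ {x}, a y * (u y - u' y)
            = ∑ y ∈ Finset.univ \ {x}, a y * u y
              - ∑ y ∈ Finset.univ \ {x}, a y * u' y := by
          rw [← Finset.sum_sub_distrib]
          exact Finset.sum_congr rfl fun y _ => by ring
        rw [this]; ring
      rw [heq, abs_mul, abs_of_pos (inv_pos.mpr hsa0)]
      have hsumabs : |∑ y ∈ Finset.univ \ {x}, a y * (u y - u' y)| ≤ sa * N := by
        calc |∑ y ∈ Finset.univ \ {x}, a y * (u y - u' y)|
            ≤ ∑ y ∈ Finset.univ \ {x}, |a y * (u y - u' y)| :=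
              Finset.abs_sum_le_sum_abs _ _
          _ ≤ ∑ y ∈ Finset.univ \ {x}, a y * N := by
              refine Finset.sum_le_sum fun y hy => ?_
              have hay := ha.1 y (by simpa using (Finset.mem_sdiff.mp hy).2)
              have hay0 : 0 ≤ a y := le_trans hal.le hay.1
              rw [abs_mul, abs_of_nonneg hay0]
              refine mul_le_mul_of_nonneg_left ?_ hay0
              have : |u y - u' y| = ‖(u - u') y‖ := by simp [Real.norm_eq_abs]
              rw [this, hN]
              exact norm_le_pi_norm (u - u') y
          _ = sa * N := by rw [← Finset.sum_mul]
      calc (sa + r)⁻¹ * |∑ y ∈ Finset.univ \ {x}, a y * (u y - u' y)|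
          ≤ (sa + r)⁻¹ * (sa * N) :=
            mul_le_mul_of_nonneg_left hsumabs (by positivity)
        _ ≤ c2 := by
            rw [hc2, inv_mul_eq_div, div_mul_eq_mul_div, div_le_div_iff₀ hsa0 hBr]
            nlinarith [mul_nonneg hN0 hr.le, hs2]
    calc |u x - u' x| = |S μ u x - S μ' u' x| := by rw [hu, hu']
      _ ≤ |S μ u x - S μ' u x| + |S μ' u x - S μ' u' x| := abs_sub_le _ _ _
      _ ≤ c1 + c2 := add_le_add t1 t2
  -- sup norm bound
  have hNle : N ≤ c1 + c2 := by
    rw [hN]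
    refine pi_norm_le_iff_of_nonneg (by positivity) |>.mpr fun x => ?_
    simpa [Real.norm_eq_abs] using key x
  -- solve for N
  have hfinal : N * r ≤ (B + r) * c1 := by
    have h1 : N * (B + r) ≤ (c1 + c2) * (B + r) := by
      exact mul_le_mul_of_nonneg_right hNle hBr.le
    have h2 : c2 * (B + r) = B * N := by
      rw [hc2]; field_simp
    nlinarith
  show N ≤ (B + r) / r * (CLF / A) * m
  have h3 : (B + r) / r * (CLF / A) * m = (B + r) * c1 / r := by
    rw [hc1]; field_simp
  rw [h3, le_div_iff₀ hr]
  exact hfinal
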